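/- For any derivator g, any x₀ ∈ ℝ, any n ∈ ℕ and x ∈ ℝ: g_n(x) = Σ_{k=0}^{n} C(n,k) · g_k^C(x) · g_{n−k}^B(x), i.e., every g-monomial is a binomial combination of monomials of the continuous part and jump part of g. -/

import Mathlib

open MeasureTheory Set Finset

/-- The jump of `g` at `x`: `Δg(x) = g(x⁺) − g(x)`. -/
noncomputable def jumpOf (g : ℝ → ℝ) (x : ℝ) : ℝ := Function.rightLim g x - g x

/-- Oriented Lebesgue–Stieltjes integral: `∫_a^b f dμ = ∫_{[a,b)} f dμ` if `a ≤ b`,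
`= −∫_{[b,a)} f dμ` otherwise. -/
noncomputable def ointeg (μ : MeasureTheory.Measure ℝ) (f : ℝ → ℝ) (a b : ℝ) : ℝ :=
  if a ≤ b then ∫ s in Set.Ico a b, f s ∂μ else - ∫ s in Set.Ico b a, f s ∂μ

/-- The `g`-monomials centered at `c`, defined from the Lebesgue–Stieltjes measure `μ` of `g`:
`g_0 ≡ 1`, `g_{n+1}(x) = (n+1) ∫_c^x g_n dμ` (oriented). -/
noncomputable def gMon (μ : MeasureTheory.Measure ℝ) (c : ℝ) : ℕ → ℝ → ℝ
  | 0 => fun _ => 1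
  | n + 1 => fun x => ((n : ℝ) + 1) * ointeg μ (gMon μ c n) c x


/-- The accumulated jump function `g^B` of `g`: `g^B(x) = Σ_{t∈[0,x)} Δg(t)` for `x ≥ 0`
and `g^B(x) = −Σ_{t∈[x,0)} Δg(t)` for `x < 0`. -/
noncomputable def jumpPart (g : ℝ → ℝ) (x : ℝ) : ℝ :=
  if 0 ≤ x then ∑' t : (Set.Ico (0:ℝ) x), jumpOf g (t : ℝ)
  else - ∑' t : (Set.Ico x (0:ℝ)), jumpOf g (t : ℝ)


theorem jumpOf_nonneg {g : ℝ → ℝ} (hg : Monotone g) (x : ℝ) : 0 ≤ jumpOf g x :=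
  sub_nonneg.2 (hg.le_rightLim le_rfl)

theorem sum_jump_le {g : ℝ → ℝ} (hg : Monotone g) (T : Finset ℝ) :
    ∀ a b : ℝ, a ≤ b → (↑T ⊆ Set.Ico a b) →
    ∑ t ∈ T, jumpOf g t ≤ g b - g a := by
  classical
  induction T using Finset.induction_on_max with
  | empty => intro a b hab _; simp [sub_nonneg, hg hab]
  | insert m s hmax ih =>
    intro a b hab hsub
    have hm : m ∈ Set.Ico a b := hsub (by simp)
    have hs : ↑s ⊆ Set.Ico a m := by
      intro t ht
      have htm := hmax t ht
      have : t ∈ Set.Ico a b := hsub (by simp [Finset.mem_coe.1 ht])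
      exact ⟨this.1, htm⟩
    rw [Finset.sum_insert (fun h => lt_irrefl m (hmax m h))]
    have h1 : ∑ t ∈ s, jumpOf g t ≤ g m - g a := ih a m hm.1 hs
    have h2 : jumpOf g m ≤ g b - g m :=
      sub_le_sub_right (hg.rightLim_le hm.2) _
    linarith

/-- summability of jumps on `Ico a b` -/
theorem summable_jumps {g : ℝ → ℝ} (hg : Monotone g) (a b : ℝ) :
    Summable (fun t : Set.Ico a b => jumpOf g (t : ℝ)) := by
  rcases le_or_gt b a with h | h
  · have : Set.Ico a b = ∅ := Set.Ico_eq_empty (not_lt.2 h)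
    rw [this]; exact summable_empty
  refine summable_of_sum_le (fun t => jumpOf_nonneg hg _) (fun u => ?_) (c := g b - g a)
  calc ∑ t ∈ u, jumpOf g (t : ℝ) = ∑ t ∈ u.image (fun t : Set.Ico a b => (t:ℝ)), jumpOf g t := by
        rw [Finset.sum_image (by intro x _ y _ hxy; exact Subtype.ext hxy)]
    _ ≤ g b - g a := by
        apply sum_jump_le hg _ a b h.le
        intro t ht
        simp only [Finset.coe_image, Set.mem_image] at ht
        obtain ⟨⟨t', ht'⟩, _, rfl⟩ := ht
        exact ht'

theorem tsum_jumps_le {g : ℝ → ℝ} (hg : Monotone g) {a b : ℝ} (hab : a ≤ b) :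
    ∑' t : Set.Ico a b, jumpOf g (t : ℝ) ≤ g b - g a := by
  refine Summable.tsum_le_of_sum_le (summable_jumps hg a b) (fun u => ?_)
  calc ∑ t ∈ u, jumpOf g (t : ℝ) = ∑ t ∈ u.image (fun t : Set.Ico a b => (t:ℝ)), jumpOf g t := by
        rw [Finset.sum_image (by intro x _ y _ hxy; exact Subtype.ext hxy)]
    _ ≤ g b - g a := by
        apply sum_jump_le hg _ a b hab
        intro t ht
        simp only [Finset.coe_image, Set.mem_image] at ht
        obtain ⟨⟨t', ht'⟩, _, rfl⟩ := ht
        exact ht'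

theorem tsum_jumps_split {g : ℝ → ℝ} (hg : Monotone g) {a c b : ℝ} (hac : a ≤ c) (hcb : c ≤ b) :
    ∑' t : Set.Ico a b, jumpOf g (t : ℝ) =
      (∑' t : Set.Ico a c, jumpOf g (t : ℝ)) + ∑' t : Set.Ico c b, jumpOf g (t : ℝ) := by
  have hu : Set.Ico a c ∪ Set.Ico c b = Set.Ico a b := Set.Ico_union_Ico_eq_Ico hac hcb
  have hd : Disjoint (Set.Ico a c) (Set.Ico c b) := by
    apply Set.disjoint_left.2
    rintro x ⟨_, hxc⟩ ⟨hcx, _⟩; exact absurd hcx (not_le.2 hxc)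
  rw [← hu]
  exact Summable.tsum_union_disjoint (f := fun t => jumpOf g t) hd
    (summable_jumps hg a c) (summable_jumps hg c b)

theorem jumpPart_sub {g : ℝ → ℝ} (hg : Monotone g) {a b : ℝ} (hab : a ≤ b) :
    jumpPart g b - jumpPart g a = ∑' t : Set.Ico a b, jumpOf g (t : ℝ) := by
  unfold jumpPart
  rcases le_or_gt 0 a with h0a | ha0
  · rw [if_pos h0a, if_pos (h0a.trans hab)]
    rw [tsum_jumps_split hg h0a hab]; ring
  · rcases le_or_gt 0 b with h0b | hb0
    · rw [if_pos h0b, if_neg (not_le.2 ha0)]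
      rw [tsum_jumps_split hg ha0.le h0b (a := a) (c := 0) (b := b)]; ring
    · rw [if_neg (not_le.2 hb0), if_neg (not_le.2 ha0)]
      have := tsum_jumps_split hg hab hb0.le (a := a) (c := b) (b := 0)
      rw [this]; ring

theorem jumpPart_mono {g : ℝ → ℝ} (hg : Monotone g) : Monotone (jumpPart g) := by
  intro a b hab
  have := jumpPart_sub hg hab
  have h2 : 0 ≤ ∑' t : Set.Ico a b, jumpOf g (t : ℝ) :=
    tsum_nonneg (fun t => jumpOf_nonneg hg _)
  linarith

theorem contPart_mono {g : ℝ → ℝ} (hg : Monotone g) :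
    Monotone (fun x => g x - jumpPart g x) := by
  intro a b hab
  have h1 := jumpPart_sub hg hab
  have h2 := tsum_jumps_le hg hab
  simp only
  linarith

theorem jumpOf_le_jumpPart_sub {g : ℝ → ℝ} (hg : Monotone g) {a b : ℝ} (hab : a < b) :
    jumpOf g a ≤ jumpPart g b - jumpPart g a := by
  rw [jumpPart_sub hg hab.le]
  exact Summable.le_tsum (summable_jumps hg a b) ⟨a, le_rfl, hab⟩
    (fun t _ => jumpOf_nonneg hg _)

/-- the continuous part has zero right jumps -/
theorem contPart_rightLim {g : ℝ → ℝ} (hg : Monotone g) (s : ℝ) :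
    Filter.Tendsto (fun y => (g y - jumpPart g y) - (g s - jumpPart g s)) (nhdsWithin s (Set.Ioi s)) (nhds 0) := by
  have hmono : Monotone (fun x => g x - jumpPart g x) := contPart_mono hg
  have hgt := hg.tendsto_rightLim s
  rw [Metric.tendsto_nhdsWithin_nhds] at hgt ⊢
  intro ε hε
  obtain ⟨δ, hδ, hδ'⟩ := hgt ε hε
  refine ⟨δ, hδ, fun {y} hy hyd => ?_⟩
  have hsy : s < y := hy
  have hb : (g y - jumpPart g y) - (g s - jumpPart g s) ≤ g y - g s - jumpOf g s := by
    have := jumpOf_le_jumpPart_sub hg hsy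
    linarith
  have hnn : 0 ≤ (g y - jumpPart g y) - (g s - jumpPart g s) :=
    sub_nonneg.2 (hmono hsy.le)
  have hlt : dist (g y) (Function.rightLim g s) < ε := hδ' hy hyd
  rw [Real.dist_eq] at hlt
  rw [Real.dist_eq, sub_zero]
  rw [abs_lt] at hlt
  rw [abs_of_nonneg hnn]
  have : jumpOf g s = Function.rightLim g s - g s := rfl
  linarith

section Meas
variable {g : ℝ → ℝ} {μ μB μC : MeasureTheory.Measure ℝ}

theorem muC_atomless (hg : Monotone g)
    (hμC : ∀ a b : ℝ, a ≤ b →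
      μC (Set.Ico a b) = ENNReal.ofReal ((g b - jumpPart g b) - (g a - jumpPart g a)))
    (s : ℝ) : μC {s} = 0 := by
  refine le_antisymm ?_ (zero_le)
  have h := ENNReal.le_of_forall_pos_le_add (b := 0) (a := μC {s}) ?_
  · simpa using h
  intro ε hε _
  have := contPart_rightLim hg s
  rw [Metric.tendsto_nhdsWithin_nhds] at this
  obtain ⟨δ, hδ, hδ'⟩ := this ε (by exact_mod_cast hε)
  set y := s + δ/2 with hy
  have hsy : s < y := by simp [hy]; linarith
  have h1 : dist ((g y - jumpPart g y) - (g s - jumpPart g s)) 0 < ε := by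
    apply hδ' hsy
    rw [Real.dist_eq]; rw [abs_of_pos (by linarith : (0:ℝ) < y - s)]; simp [hy]; linarith
  rw [Real.dist_eq, sub_zero] at h1
  have h2 : μC {s} ≤ μC (Set.Ico s y) := measure_mono (by intro t ht; simp at ht; subst ht; exact ⟨le_rfl, hsy⟩)
  rw [hμC s y hsy.le] at h2
  refine h2.trans ?_
  rw [zero_add]
  refine (ENNReal.ofReal_le_ofReal (le_of_lt (lt_of_abs_lt h1))).trans ?_
  simp

theorem mu_eq_add (hg : Monotone g)
    (hμ : ∀ a b : ℝ, a ≤ b → μ (Set.Ico a b) = ENNReal.ofReal (g b - g a))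
    (hμB : ∀ a b : ℝ, a ≤ b →
      μB (Set.Ico a b) = ENNReal.ofReal (jumpPart g b - jumpPart g a))
    (hμC : ∀ a b : ℝ, a ≤ b →
      μC (Set.Ico a b) = ENNReal.ofReal ((g b - jumpPart g b) - (g a - jumpPart g a))) :
    μ = μC + μB := by
  refine MeasureTheory.Measure.ext_of_Ico' μ (μC + μB) (fun a b _ => ?_) (fun a b hab => ?_)
  · rw [hμ a b (le_of_lt ‹_›)]; exact ENNReal.ofReal_ne_top
  · rw [hμ a b hab.le, MeasureTheory.Measure.add_apply, hμB a b hab.le, hμC a b hab.le]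
    rw [← ENNReal.ofReal_add]
    · congr 1; ring
    · have := contPart_mono hg hab.le; simpa using this
    · have := jumpPart_mono hg hab.le; linarith

end Meas

def Nice (f : ℝ → ℝ) : Prop :=
  Measurable f ∧ ∀ a b : ℝ, ∃ C, ∀ x ∈ Set.Icc a b, |f x| ≤ C

theorem nice_one : Nice (fun _ : ℝ => 1) :=
  ⟨measurable_const, fun _ _ => ⟨1, fun _ _ => by norm_num⟩⟩

theorem Nice.mul {f h : ℝ → ℝ} (hf : Nice f) (hh : Nice h) : Nice (fun x => f x * h x) := by
  refine ⟨hf.1.mul hh.1, fun a b => ?_⟩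
  obtain ⟨C, hC⟩ := hf.2 a b
  obtain ⟨D, hD⟩ := hh.2 a b
  refine ⟨max C 0 * max D 0, fun x hx => ?_⟩
  rw [abs_mul]
  exact mul_le_mul ((hC x hx).trans (le_max_left _ _)) ((hD x hx).trans (le_max_left _ _))
    (abs_nonneg _) (le_max_right _ _)

section NiceInt
variable {ν : MeasureTheory.Measure ℝ}

theorem restrict_finite (hfin : ∀ a b : ℝ, a ≤ b → ν (Set.Ico a b) ≠ ⊤) (a b : ℝ) :
    MeasureTheory.IsFiniteMeasure (ν.restrict (Set.Ico a b)) := by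
  constructor
  rw [MeasureTheory.Measure.restrict_apply_univ]
  rcases le_or_gt a b with h | h
  · exact lt_top_iff_ne_top.2 (hfin a b h)
  · simp [Set.Ico_eq_empty (not_lt.2 h.le)]

theorem Nice.integrableOn (hfin : ∀ a b : ℝ, a ≤ b → ν (Set.Ico a b) ≠ ⊤)
    {f : ℝ → ℝ} (hf : Nice f) (a b : ℝ) :
    MeasureTheory.IntegrableOn f (Set.Ico a b) ν := by
  obtain ⟨C, hC⟩ := hf.2 a b
  have := restrict_finite hfin a b
  refine MeasureTheory.Integrable.mono' (MeasureTheory.integrable_const C)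
    hf.1.aestronglyMeasurable ?_
  refine (MeasureTheory.ae_restrict_iff' measurableSet_Ico).2 ?_
  filter_upwards with x hx
  exact hC x ⟨hx.1, hx.2.le⟩

theorem cum_monotone (hfin : ∀ a b : ℝ, a ≤ b → ν (Set.Ico a b) ≠ ⊤)
    {f : ℝ → ℝ} (hf : Nice f) (hf0 : ∀ x, 0 ≤ f x) (x₀ : ℝ) :
    Monotone (fun x => ointeg ν f x₀ x) := by
  intro x y hxy
  simp only [ointeg]
  rcases le_or_gt x₀ x with h1 | h1
  · rw [if_pos h1, if_pos (h1.trans hxy)]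
    exact MeasureTheory.setIntegral_mono_set (hf.integrableOn hfin x₀ y)
      (Filter.Eventually.of_forall (fun t => hf0 t))
      ((Set.Ico_subset_Ico_right hxy).eventuallyLE)
  · rw [if_neg (not_le.2 h1)]
    rcases le_or_gt x₀ y with h2 | h2
    · rw [if_pos h2]
      have hn : 0 ≤ ∫ s in Set.Ico x₀ y, f s ∂ν :=
        MeasureTheory.setIntegral_nonneg measurableSet_Ico (fun t _ => hf0 t)
      have hn2 : 0 ≤ ∫ s in Set.Ico x x₀, f s ∂ν :=
        MeasureTheory.setIntegral_nonneg measurableSet_Ico (fun t _ => hf0 t)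
      linarith
    · rw [if_neg (not_le.2 h2)]
      have := MeasureTheory.setIntegral_mono_set (hf.integrableOn hfin x x₀)
        (Filter.Eventually.of_forall (fun t => hf0 t))
        ((Set.Ico_subset_Ico_left hxy).eventuallyLE)
      linarith

theorem nice_pos_part {f : ℝ → ℝ} (hf : Nice f) : Nice (fun x => max (f x) 0) := by
  refine ⟨hf.1.max measurable_const, fun a b => ?_⟩
  obtain ⟨C, hC⟩ := hf.2 a b
  refine ⟨max C 0, fun x hx => ?_⟩
  rw [abs_of_nonneg (le_max_right _ _)]
  exact max_le_max (le_of_abs_le (hC x hx)) le_rfl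

theorem ointeg_eq_sub (hfin : ∀ a b : ℝ, a ≤ b → ν (Set.Ico a b) ≠ ⊤)
    {f : ℝ → ℝ} (hf : Nice f) (x₀ x : ℝ) :
    ointeg ν f x₀ x = ointeg ν (fun t => max (f t) 0) x₀ x
      - ointeg ν (fun t => max (-f t) 0) x₀ x := by
  have key : ∀ a b : ℝ, ∫ s in Set.Ico a b, f s ∂ν =
      (∫ s in Set.Ico a b, max (f s) 0 ∂ν) - ∫ s in Set.Ico a b, max (-f s) 0 ∂ν := by
    intro a b
    rw [← MeasureTheory.integral_sub ((nice_pos_part hf).integrableOn hfin a b)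
      ((nice_pos_part (⟨hf.1.neg, fun a' b' => by
          obtain ⟨C, hC⟩ := hf.2 a' b'
          exact ⟨C, fun x hx => by rw [abs_neg]; exact hC x hx⟩⟩ : Nice (fun x => -f x))).integrableOn hfin a b)]
    apply MeasureTheory.setIntegral_congr_fun measurableSet_Ico
    intro t _
    simp only
    rcases le_or_gt 0 (f t) with h | h
    · rw [max_eq_left h, max_eq_right (by linarith)]; ring
    · rw [max_eq_right h.le, max_eq_left (by linarith)]; ring
  simp only [ointeg]
  split
  · exact key x₀ x
  · rw [key x x₀]; ring

theorem measurable_ointeg (hfin : ∀ a b : ℝ, a ≤ b → ν (Set.Ico a b) ≠ ⊤)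
    {f : ℝ → ℝ} (hf : Nice f) (x₀ : ℝ) :
    Measurable (fun x => ointeg ν f x₀ x) := by
  have hneg : Nice (fun x => -f x) := ⟨hf.1.neg, fun a b => by
    obtain ⟨C, hC⟩ := hf.2 a b
    exact ⟨C, fun x hx => by rw [abs_neg]; exact hC x hx⟩⟩
  have h1 : Monotone (fun x => ointeg ν (fun t => max (f t) 0) x₀ x) :=
    cum_monotone hfin (nice_pos_part hf) (fun t => le_max_right _ _) x₀
  have h2 : Monotone (fun x => ointeg ν (fun t => max (-f t) 0) x₀ x) :=
    cum_monotone hfin (nice_pos_part hneg) (fun t => le_max_right _ _) x₀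
  have : (fun x => ointeg ν f x₀ x) =
      fun x => ointeg ν (fun t => max (f t) 0) x₀ x - ointeg ν (fun t => max (-f t) 0) x₀ x :=
    funext (fun x => ointeg_eq_sub hfin hf x₀ x)
  rw [this]
  exact h1.measurable.sub h2.measurable

theorem Nice.ointeg (hfin : ∀ a b : ℝ, a ≤ b → ν (Set.Ico a b) ≠ ⊤)
    {f : ℝ → ℝ} (hf : Nice f) (x₀ : ℝ) :
    Nice (fun x => ointeg ν f x₀ x) := by
  refine ⟨measurable_ointeg hfin hf x₀, fun a b => ?_⟩
  set A := min a x₀ with hA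
  set B := max b x₀ with hB
  obtain ⟨C, hC⟩ := hf.2 A B
  have hAB : A ≤ B := le_trans (min_le_right _ _) (le_max_right _ _)
  have := restrict_finite hfin A B
  refine ⟨(max C 0) * (ν (Set.Ico A B)).toReal, fun x hx => ?_⟩
  have hsub : ∀ {u v : ℝ}, u ≤ v → Set.Ico u v ⊆ Set.Ico A B → |∫ s in Set.Ico u v, f s ∂ν| ≤ (max C 0) * (ν (Set.Ico A B)).toReal := by
    intro u v huv hsubs
    calc |∫ s in Set.Ico u v, f s ∂ν| ≤ ∫ s in Set.Ico u v, |f s| ∂ν := by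
          simpa [Real.norm_eq_abs] using
            MeasureTheory.norm_integral_le_integral_norm (μ := ν.restrict (Set.Ico u v)) f
      _ ≤ ∫ s in Set.Ico A B, |f s| ∂ν := by
          refine MeasureTheory.setIntegral_mono_set ((hf.integrableOn hfin A B).abs)
            (Filter.Eventually.of_forall (fun t => abs_nonneg _)) hsubs.eventuallyLE
      _ ≤ ∫ _ in Set.Ico A B, max C 0 ∂ν := by
          refine MeasureTheory.setIntegral_mono_on ((hf.integrableOn hfin A B).abs)
            (MeasureTheory.integrableOn_const ?_) measurableSet_Ico
            (fun t ht => (hC t ⟨ht.1, ht.2.le⟩).trans (le_max_left _ _))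
          exact hfin A B hAB
      _ = (ν (Set.Ico A B)).toReal * max C 0 := by
          rw [MeasureTheory.setIntegral_const]; simp [Measure.real]
      _ = (max C 0) * (ν (Set.Ico A B)).toReal := by ring
  simp only [_root_.ointeg]
  split
  · exact hsub ‹_› (Set.Ico_subset_Ico (min_le_right _ _) (le_trans hx.2 (le_max_left _ _)))
  · rw [abs_neg]
    exact hsub (le_of_not_ge ‹_›) (Set.Ico_subset_Ico (le_trans (min_le_left _ _) hx.1) (le_max_right _ _))

theorem Nice.const_mul {f : ℝ → ℝ} (hf : Nice f) (c : ℝ) : Nice (fun x => c * f x) := by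
  refine ⟨hf.1.const_mul c, fun a b => ?_⟩
  obtain ⟨C, hC⟩ := hf.2 a b
  exact ⟨|c| * C, fun x hx => by rw [abs_mul]; exact mul_le_mul_of_nonneg_left (hC x hx) (abs_nonneg c)⟩

theorem gMon_nice (hfin : ∀ a b : ℝ, a ≤ b → ν (Set.Ico a b) ≠ ⊤) (x₀ : ℝ) :
    ∀ n, Nice (gMon ν x₀ n)
  | 0 => nice_one
  | n + 1 => ((gMon_nice hfin x₀ n).ointeg hfin x₀).const_mul _

end NiceInt

theorem ointeg_add_measure {ν1 ν2 : MeasureTheory.Measure ℝ}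
    (hfin1 : ∀ a b : ℝ, a ≤ b → ν1 (Set.Ico a b) ≠ ⊤)
    (hfin2 : ∀ a b : ℝ, a ≤ b → ν2 (Set.Ico a b) ≠ ⊤)
    {f : ℝ → ℝ} (hf : Nice f) (a b : ℝ) :
    ointeg (ν1 + ν2) f a b = ointeg ν1 f a b + ointeg ν2 f a b := by
  have key : ∀ u v : ℝ, u ≤ v → ∫ s in Set.Ico u v, f s ∂(ν1 + ν2) =
      (∫ s in Set.Ico u v, f s ∂ν1) + ∫ s in Set.Ico u v, f s ∂ν2 := by
    intro u v huv
    rw [MeasureTheory.Measure.restrict_add]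
    exact MeasureTheory.integral_add_measure (hf.integrableOn hfin1 u v) (hf.integrableOn hfin2 u v)
  simp only [ointeg]
  split
  · exact key a b ‹_›
  · rw [key b a (le_of_not_ge ‹_›)]; ring

theorem ointeg_finset_sum {ν : MeasureTheory.Measure ℝ}
    (hfin : ∀ a b : ℝ, a ≤ b → ν (Set.Ico a b) ≠ ⊤)
    {ι : Type*} (s : Finset ι) (f : ι → ℝ → ℝ) (c : ι → ℝ)
    (hf : ∀ i ∈ s, Nice (f i)) (a b : ℝ) :
    ointeg ν (fun x => ∑ i ∈ s, c i * f i x) a b = ∑ i ∈ s, c i * ointeg ν (f i) a b := by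
  have key : ∀ u v : ℝ, u ≤ v → ∫ t in Set.Ico u v, (∑ i ∈ s, c i * f i t) ∂ν =
      ∑ i ∈ s, c i * ∫ t in Set.Ico u v, f i t ∂ν := by
    intro u v huv
    rw [MeasureTheory.integral_finset_sum]
    · exact Finset.sum_congr rfl (fun i _ => MeasureTheory.integral_const_mul _ _)
    · exact fun i hi => ((hf i hi).integrableOn hfin u v).const_mul _
  simp only [ointeg]
  split
  · exact key a b ‹_›
  · rw [key b a (le_of_not_ge ‹_›), ← Finset.sum_neg_distrib]
    exact Finset.sum_congr rfl (fun i _ => by ring)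

section Fubini
open MeasureTheory

theorem integrable_ite_mul (νa νb : Measure ℝ) [IsFiniteMeasure νa] [IsFiniteMeasure νb]
    {f h : ℝ → ℝ} {Cf Ch : ℝ} (hfm : Measurable f) (hhm : Measurable h)
    (hbf : ∀ᵐ t ∂νa, |f t| ≤ Cf) (hbh : ∀ᵐ s ∂νb, |h s| ≤ Ch)
    (p : ℝ → ℝ → Prop) [∀ t s, Decidable (p t s)]
    (hp : MeasurableSet {x : ℝ × ℝ | p x.1 x.2}) :
    Integrable (fun z : ℝ × ℝ => if p z.1 z.2 then f z.1 * h z.2 else 0) (νa.prod νb) := by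
  have hmeas : Measurable (fun z : ℝ × ℝ => if p z.1 z.2 then f z.1 * h z.2 else 0) :=
    Measurable.ite hp ((hfm.comp measurable_fst).mul (hhm.comp measurable_snd)) measurable_const
  have hSf : MeasurableSet {t : ℝ | ¬ |f t| ≤ Cf} :=
    (measurableSet_le hfm.abs measurable_const).compl
  have hSh : MeasurableSet {s : ℝ | ¬ |h s| ≤ Ch} :=
    (measurableSet_le hhm.abs measurable_const).compl
  have hb : ∀ᵐ z ∂(νa.prod νb), |f z.1| ≤ Cf ∧ |h z.2| ≤ Ch := by
    rw [MeasureTheory.ae_iff]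
    refine measure_mono_null (t := ({t : ℝ | ¬ |f t| ≤ Cf} ×ˢ (Set.univ : Set ℝ)) ∪
      ((Set.univ : Set ℝ) ×ˢ {s : ℝ | ¬ |h s| ≤ Ch})) ?_ ?_
    · intro z hz
      simp only [Set.mem_setOf_eq, not_and_or] at hz
      rcases hz with hz | hz
      · exact Or.inl ⟨hz, Set.mem_univ _⟩
      · exact Or.inr ⟨Set.mem_univ _, hz⟩
    · refine measure_union_null ?_ ?_
      · rw [MeasureTheory.Measure.prod_prod]
        rw [MeasureTheory.ae_iff] at hbf
        rw [hbf]; simp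
      · rw [MeasureTheory.Measure.prod_prod]
        rw [MeasureTheory.ae_iff] at hbh
        rw [hbh]; simp
  refine Integrable.mono' (integrable_const (Cf * Ch)) hmeas.aestronglyMeasurable ?_
  filter_upwards [hb] with z hz
  rw [Real.norm_eq_abs]
  have hCf0 : 0 ≤ Cf := le_trans (abs_nonneg _) hz.1
  have hCh0 : 0 ≤ Ch := le_trans (abs_nonneg _) hz.2
  split
  · rw [abs_mul]; exact mul_le_mul hz.1 hz.2 (abs_nonneg _) hCf0
  · simpa using mul_nonneg hCf0 hCh0

theorem fubini_key (ν1 ν2 : Measure ℝ) [IsFiniteMeasure ν1] [IsFiniteMeasure ν2]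
    (hν1 : ∀ a : ℝ, ν1 {a} = 0)
    (f h : ℝ → ℝ) (hf : Measurable f) (hh : Measurable h)
    (Cf Ch : ℝ) (hbf : ∀ᵐ t ∂ν1, |f t| ≤ Cf) (hbh : ∀ᵐ s ∂ν2, |h s| ≤ Ch)
    (p q : ℝ → ℝ → Prop) [∀ t s, Decidable (p t s)] [∀ t s, Decidable (q t s)]
    (hp : MeasurableSet {x : ℝ × ℝ | p x.1 x.2})
    (hq : MeasurableSet {x : ℝ × ℝ | q x.1 x.2})
    (hpq : ∀ t s, t ≠ s → (p t s ↔ ¬ q t s)) :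
    (∫ t, f t * (∫ s, (if p t s then h s else 0) ∂ν2) ∂ν1)
      + (∫ s, h s * (∫ t, (if q t s then f t else 0) ∂ν1) ∂ν2)
    = (∫ t, f t ∂ν1) * (∫ s, h s ∂ν2) := by
  set F : ℝ × ℝ → ℝ := fun z => if p z.1 z.2 then f z.1 * h z.2 else 0 with hF
  set G : ℝ × ℝ → ℝ := fun z => if q z.1 z.2 then f z.1 * h z.2 else 0 with hG
  have hFint : Integrable F (ν1.prod ν2) := integrable_ite_mul ν1 ν2 hf hh hbf hbh p hp
  have hGint : Integrable G (ν1.prod ν2) := integrable_ite_mul ν1 ν2 hf hh hbf hbh q hq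
  -- term 1
  have t1 : (∫ t, f t * (∫ s, (if p t s then h s else 0) ∂ν2) ∂ν1) = ∫ z, F z ∂(ν1.prod ν2) := by
    rw [MeasureTheory.integral_prod _ hFint]
    congr 1; funext t
    rw [← MeasureTheory.integral_const_mul]
    congr 1; funext s
    simp only [hF, mul_ite, mul_zero]
  -- term 2
  have hq' : MeasurableSet {x : ℝ × ℝ | q x.2 x.1} := by
    have : {x : ℝ × ℝ | q x.2 x.1} = Prod.swap ⁻¹' {x : ℝ × ℝ | q x.1 x.2} := rfl
    rw [this]; exact measurable_swap hq
  have hGswap : Integrable (fun z : ℝ × ℝ => G z.swap) (ν2.prod ν1) := by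
    have base := integrable_ite_mul ν2 ν1 hh hf hbh hbf (fun t s => q s t) hq'
    refine base.congr (Filter.Eventually.of_forall (fun z => ?_))
    simp only [hG, Prod.swap]
    split
    · ring
    · rfl
  have t2 : (∫ s, h s * (∫ t, (if q t s then f t else 0) ∂ν1) ∂ν2) = ∫ z, G z ∂(ν1.prod ν2) := by
    rw [← MeasureTheory.integral_prod_swap]
    rw [MeasureTheory.integral_prod _ hGswap]
    congr 1; funext s
    rw [← MeasureTheory.integral_const_mul]
    congr 1; funext t
    simp only [hG, Prod.swap, mul_ite, mul_zero]
    split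
    · ring
    · rfl
  rw [t1, t2, ← MeasureTheory.integral_add hFint hGint]
  have hdiag : MeasurableSet {z : ℝ × ℝ | z.1 = z.2} := measurableSet_eq_fun measurable_fst measurable_snd
  have hnull : (ν1.prod ν2) {z : ℝ × ℝ | z.1 = z.2} = 0 := by
    have hswap : (ν1.prod ν2) {z : ℝ × ℝ | z.1 = z.2} =
        (ν2.prod ν1) {z : ℝ × ℝ | z.1 = z.2} := by
      rw [← MeasureTheory.Measure.prod_swap]
      rw [MeasureTheory.Measure.map_apply measurable_swap hdiag]
      congr 1
      ext z
      simp [Prod.swap, eq_comm]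
    rw [hswap, MeasureTheory.Measure.prod_apply hdiag]
    have : ∀ s : ℝ, ν1 (Prod.mk s ⁻¹' {z : ℝ × ℝ | z.1 = z.2}) = 0 := by
      intro s
      have : (Prod.mk s ⁻¹' {z : ℝ × ℝ | z.1 = z.2}) = {s} := by
        ext t; simp [eq_comm]
      rw [this]; exact hν1 s
    simp only [this]
    simp [hν1]
  have key : (fun z : ℝ × ℝ => F z + G z) =ᵐ[ν1.prod ν2] (fun z => f z.1 * h z.2) := by
    have : {z : ℝ × ℝ | ¬ (F z + G z = f z.1 * h z.2)} ⊆ {z : ℝ × ℝ | z.1 = z.2} := by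
      intro z hz
      by_contra hne
      apply hz
      simp only [Set.mem_setOf_eq] at hne
      have := hpq z.1 z.2 hne
      simp only [hF, hG]
      by_cases hp' : p z.1 z.2
      · rw [if_pos hp', if_neg (by tauto)]; ring
      · rw [if_neg hp', if_pos (by tauto)]; ring
    exact MeasureTheory.ae_iff.2 (measure_mono_null this hnull)
  rw [MeasureTheory.integral_congr_ae key]
  exact MeasureTheory.integral_prod_mul f h

end Fubini

section ProdRule
open MeasureTheory

variable {νC νB : Measure ℝ} {x₀ : ℝ}

theorem prod_rule (hfinC : ∀ a b : ℝ, a ≤ b → νC (Set.Ico a b) ≠ ⊤)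
    (hfinB : ∀ a b : ℝ, a ≤ b → νB (Set.Ico a b) ≠ ⊤)
    (hatomC : ∀ a : ℝ, νC {a} = 0) (k m : ℕ) (x : ℝ) :
    gMon νC x₀ (k+1) x * gMon νB x₀ (m+1) x
      = ((k:ℝ)+1) * ointeg νC (fun t => gMon νC x₀ k t * gMon νB x₀ (m+1) t) x₀ x
        + ((m:ℝ)+1) * ointeg νB (fun s => gMon νC x₀ (k+1) s * gMon νB x₀ m s) x₀ x := by
  have hFk := gMon_nice hfinC x₀ k
  have hFk1 := gMon_nice hfinC x₀ (k+1)
  have hGm := gMon_nice hfinB x₀ m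
  have hGm1 := gMon_nice hfinB x₀ (m+1)
  rcases le_or_gt x₀ x with hx | hx
  · -- positive orientation
    set I := Set.Ico x₀ x with hI
    set ν1 := νC.restrict I with hν1def
    set ν2 := νB.restrict I with hν2def
    haveI : IsFiniteMeasure ν1 := restrict_finite hfinC x₀ x
    haveI : IsFiniteMeasure ν2 := restrict_finite hfinB x₀ x
    have hν1 : ∀ a : ℝ, ν1 {a} = 0 := by
      intro a
      rw [hν1def, Measure.restrict_apply (measurableSet_singleton a)]
      exact measure_mono_null Set.inter_subset_left (hatomC a)
    obtain ⟨CF, hCF⟩ := hFk.2 x₀ x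
    obtain ⟨CG, hCG⟩ := hGm.2 x₀ x
    have hbF : ∀ᵐ t ∂ν1, |gMon νC x₀ k t| ≤ CF := by
      rw [hν1def]
      filter_upwards [ae_restrict_mem measurableSet_Ico] with t ht
      exact hCF t ⟨ht.1, ht.2.le⟩
    have hbG : ∀ᵐ s ∂ν2, |gMon νB x₀ m s| ≤ CG := by
      rw [hν2def]
      filter_upwards [ae_restrict_mem measurableSet_Ico] with s hs
      exact hCG s ⟨hs.1, hs.2.le⟩
    have hp : MeasurableSet {z : ℝ × ℝ | z.2 < z.1} := measurableSet_lt measurable_snd measurable_fst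
    have hq : MeasurableSet {z : ℝ × ℝ | z.1 < z.2} := measurableSet_lt measurable_fst measurable_snd
    have fub := fubini_key ν1 ν2 hν1 (gMon νC x₀ k) (gMon νB x₀ m) hFk.1 hGm.1 CF CG hbF hbG
      (fun t s => s < t) (fun t s => t < s) hp hq (fun t s hne => by constructor <;> intro h <;> simp at * <;> [exact h.le; exact lt_of_le_of_ne h (Ne.symm hne)])
    -- claim 1 : inner representation of G_{m+1}
    have claim1 : ∀ t ∈ I, gMon νB x₀ (m+1) t
        = ((m:ℝ)+1) * ∫ s, (if s < t then gMon νB x₀ m s else 0) ∂ν2 := by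
      intro t ht
      have h1 : gMon νB x₀ (m+1) t = ((m:ℝ)+1) * ointeg νB (gMon νB x₀ m) x₀ t := rfl
      rw [h1]
      congr 1
      rw [ointeg, if_pos ht.1]
      have e1 : (fun s => if s < t then gMon νB x₀ m s else 0) = (Set.Iio t).indicator (gMon νB x₀ m) := by
        funext s; by_cases h : s < t <;> simp [Set.indicator_apply, Set.mem_Iio, h]
      have hset : Set.Iio t ∩ I = Set.Ico x₀ t := by
        apply Set.eq_of_subset_of_subset
        · rintro s ⟨h1', h2'⟩
          exact ⟨h2'.1, h1'⟩
        · rintro s ⟨h1', h2'⟩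
          exact ⟨h2', h1', h2'.trans ht.2⟩
      rw [e1, MeasureTheory.integral_indicator measurableSet_Iio, hν2def,
        Measure.restrict_restrict measurableSet_Iio, hset]
    have claim2 : ∀ s ∈ I, gMon νC x₀ (k+1) s
        = ((k:ℝ)+1) * ∫ t, (if t < s then gMon νC x₀ k t else 0) ∂ν1 := by
      intro s hs
      have h1 : gMon νC x₀ (k+1) s = ((k:ℝ)+1) * ointeg νC (gMon νC x₀ k) x₀ s := rfl
      rw [h1]
      congr 1
      rw [ointeg, if_pos hs.1]
      have e1 : (fun t => if t < s then gMon νC x₀ k t else 0) = (Set.Iio s).indicator (gMon νC x₀ k) := by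
        funext t; by_cases h : t < s <;> simp [Set.indicator_apply, Set.mem_Iio, h]
      have hset : Set.Iio s ∩ I = Set.Ico x₀ s := by
        apply Set.eq_of_subset_of_subset
        · rintro t ⟨h1', h2'⟩
          exact ⟨h2'.1, h1'⟩
        · rintro t ⟨h1', h2'⟩
          exact ⟨h2', h1', h2'.trans hs.2⟩
      rw [e1, MeasureTheory.integral_indicator measurableSet_Iio, hν1def,
        Measure.restrict_restrict measurableSet_Iio, hset]
    -- c1
    have c1 : ointeg νC (fun t => gMon νC x₀ k t * gMon νB x₀ (m+1) t) x₀ x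
        = ((m:ℝ)+1) * ∫ t, gMon νC x₀ k t * (∫ s, (if s < t then gMon νB x₀ m s else 0) ∂ν2) ∂ν1 := by
      rw [ointeg, if_pos hx, ← MeasureTheory.integral_const_mul]
      refine MeasureTheory.integral_congr_ae ?_
      filter_upwards [ae_restrict_mem measurableSet_Ico] with t ht
      rw [claim1 t ht]
      ring
    have c2 : ointeg νB (fun s => gMon νC x₀ (k+1) s * gMon νB x₀ m s) x₀ x
        = ((k:ℝ)+1) * ∫ s, gMon νB x₀ m s * (∫ t, (if t < s then gMon νC x₀ k t else 0) ∂ν1) ∂ν2 := by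
      rw [ointeg, if_pos hx, ← MeasureTheory.integral_const_mul]
      refine MeasureTheory.integral_congr_ae ?_
      filter_upwards [ae_restrict_mem measurableSet_Ico] with s hs
      rw [claim2 s hs]
      ring
    have lhs1 : gMon νC x₀ (k+1) x = ((k:ℝ)+1) * ∫ t, gMon νC x₀ k t ∂ν1 := by
      have h1 : gMon νC x₀ (k+1) x = ((k:ℝ)+1) * ointeg νC (gMon νC x₀ k) x₀ x := rfl
      rw [h1, ointeg, if_pos hx, hν1def]
    have lhs2 : gMon νB x₀ (m+1) x = ((m:ℝ)+1) * ∫ s, gMon νB x₀ m s ∂ν2 := by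
      have h1 : gMon νB x₀ (m+1) x = ((m:ℝ)+1) * ointeg νB (gMon νB x₀ m) x₀ x := rfl
      rw [h1, ointeg, if_pos hx, hν2def]
    beta_reduce at fub
    rw [lhs1, lhs2, c1, c2]
    linear_combination (-(((k:ℝ)+1) * ((m:ℝ)+1))) * fub
  · -- negative orientation
    have hxle : ¬ x₀ ≤ x := not_le.2 hx
    set I := Set.Ico x x₀ with hI
    set ν1 := νC.restrict I with hν1def
    set ν2 := νB.restrict I with hν2def
    haveI : IsFiniteMeasure ν1 := restrict_finite hfinC x x₀
    haveI : IsFiniteMeasure ν2 := restrict_finite hfinB x x₀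
    have hν1 : ∀ a : ℝ, ν1 {a} = 0 := by
      intro a
      rw [hν1def, Measure.restrict_apply (measurableSet_singleton a)]
      exact measure_mono_null Set.inter_subset_left (hatomC a)
    obtain ⟨CF, hCF⟩ := hFk.2 x x₀
    obtain ⟨CG, hCG⟩ := hGm.2 x x₀
    have hbF : ∀ᵐ t ∂ν1, |gMon νC x₀ k t| ≤ CF := by
      rw [hν1def]
      filter_upwards [ae_restrict_mem measurableSet_Ico] with t ht
      exact hCF t ⟨ht.1, ht.2.le⟩
    have hbG : ∀ᵐ s ∂ν2, |gMon νB x₀ m s| ≤ CG := by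
      rw [hν2def]
      filter_upwards [ae_restrict_mem measurableSet_Ico] with s hs
      exact hCG s ⟨hs.1, hs.2.le⟩
    have hp : MeasurableSet {z : ℝ × ℝ | z.1 ≤ z.2} := measurableSet_le measurable_fst measurable_snd
    have hq : MeasurableSet {z : ℝ × ℝ | z.2 ≤ z.1} := measurableSet_le measurable_snd measurable_fst
    have fub := fubini_key ν1 ν2 hν1 (gMon νC x₀ k) (gMon νB x₀ m) hFk.1 hGm.1 CF CG hbF hbG
      (fun t s => t ≤ s) (fun t s => s ≤ t) hp hq (fun t s hne => by
        constructor
        · intro h h2; exact hne (le_antisymm h h2)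
        · intro h; exact le_of_not_ge h)
    have claim1 : ∀ t ∈ I, gMon νB x₀ (m+1) t
        = -(((m:ℝ)+1) * ∫ s, (if t ≤ s then gMon νB x₀ m s else 0) ∂ν2) := by
      intro t ht
      have h1 : gMon νB x₀ (m+1) t = ((m:ℝ)+1) * ointeg νB (gMon νB x₀ m) x₀ t := rfl
      rw [h1, ointeg, if_neg (not_le.2 (ht.2))]
      have e1 : (fun s => if t ≤ s then gMon νB x₀ m s else 0) = (Set.Ici t).indicator (gMon νB x₀ m) := by
        funext s; by_cases h : t ≤ s <;> simp [Set.indicator_apply, Set.mem_Ici, h]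
      have hset : Set.Ici t ∩ I = Set.Ico t x₀ := by
        apply Set.eq_of_subset_of_subset
        · rintro s ⟨h1', h2'⟩
          exact ⟨h1', h2'.2⟩
        · rintro s ⟨h1', h2'⟩
          exact ⟨h1', ht.1.trans h1', h2'⟩
      rw [e1, MeasureTheory.integral_indicator measurableSet_Ici, hν2def,
        Measure.restrict_restrict measurableSet_Ici, hset]
      ring
    have claim2 : ∀ s ∈ I, gMon νC x₀ (k+1) s
        = -(((k:ℝ)+1) * ∫ t, (if s ≤ t then gMon νC x₀ k t else 0) ∂ν1) := by
      intro s hs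
      have h1 : gMon νC x₀ (k+1) s = ((k:ℝ)+1) * ointeg νC (gMon νC x₀ k) x₀ s := rfl
      rw [h1, ointeg, if_neg (not_le.2 (hs.2))]
      have e1 : (fun t => if s ≤ t then gMon νC x₀ k t else 0) = (Set.Ici s).indicator (gMon νC x₀ k) := by
        funext t; by_cases h : s ≤ t <;> simp [Set.indicator_apply, Set.mem_Ici, h]
      have hset : Set.Ici s ∩ I = Set.Ico s x₀ := by
        apply Set.eq_of_subset_of_subset
        · rintro t ⟨h1', h2'⟩
          exact ⟨h1', h2'.2⟩
        · rintro t ⟨h1', h2'⟩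
          exact ⟨h1', hs.1.trans h1', h2'⟩
      rw [e1, MeasureTheory.integral_indicator measurableSet_Ici, hν1def,
        Measure.restrict_restrict measurableSet_Ici, hset]
      ring
    have c1 : ointeg νC (fun t => gMon νC x₀ k t * gMon νB x₀ (m+1) t) x₀ x
        = ((m:ℝ)+1) * ∫ t, gMon νC x₀ k t * (∫ s, (if t ≤ s then gMon νB x₀ m s else 0) ∂ν2) ∂ν1 := by
      rw [ointeg, if_neg hxle, ← MeasureTheory.integral_const_mul, ← MeasureTheory.integral_neg]
      refine MeasureTheory.integral_congr_ae ?_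
      filter_upwards [ae_restrict_mem measurableSet_Ico] with t ht
      rw [claim1 t ht]
      ring
    have c2 : ointeg νB (fun s => gMon νC x₀ (k+1) s * gMon νB x₀ m s) x₀ x
        = ((k:ℝ)+1) * ∫ s, gMon νB x₀ m s * (∫ t, (if s ≤ t then gMon νC x₀ k t else 0) ∂ν1) ∂ν2 := by
      rw [ointeg, if_neg hxle, ← MeasureTheory.integral_const_mul, ← MeasureTheory.integral_neg]
      refine MeasureTheory.integral_congr_ae ?_
      filter_upwards [ae_restrict_mem measurableSet_Ico] with s hs
      rw [claim2 s hs]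
      ring
    have lhs1 : gMon νC x₀ (k+1) x = ((k:ℝ)+1) * (-∫ t, gMon νC x₀ k t ∂ν1) := by
      have h1 : gMon νC x₀ (k+1) x = ((k:ℝ)+1) * ointeg νC (gMon νC x₀ k) x₀ x := rfl
      rw [h1, ointeg, if_neg hxle, hν1def]
    have lhs2 : gMon νB x₀ (m+1) x = ((m:ℝ)+1) * (-∫ s, gMon νB x₀ m s ∂ν2) := by
      have h1 : gMon νB x₀ (m+1) x = ((m:ℝ)+1) * ointeg νB (gMon νB x₀ m) x₀ x := rfl
      rw [h1, ointeg, if_neg hxle, hν2def]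
    beta_reduce at fub
    rw [lhs1, lhs2, c1, c2]
    linear_combination (-(((k:ℝ)+1) * ((m:ℝ)+1))) * fub

end ProdRule

theorem nice_zero : Nice (fun _ : ℝ => 0) :=
  ⟨measurable_const, fun _ _ => ⟨0, fun _ _ => by norm_num⟩⟩

theorem Nice.add {f h : ℝ → ℝ} (hf : Nice f) (hh : Nice h) : Nice (fun x => f x + h x) := by
  refine ⟨hf.1.add hh.1, fun a b => ?_⟩
  obtain ⟨C, hC⟩ := hf.2 a b
  obtain ⟨D, hD⟩ := hh.2 a b
  exact ⟨C + D, fun x hx => (abs_add_le _ _).trans (add_le_add (hC x hx) (hD x hx))⟩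

theorem nice_sum {ι : Type*} (s : Finset ι) (c : ι → ℝ) (f : ι → ℝ → ℝ)
    (hf : ∀ i ∈ s, Nice (f i)) : Nice (fun x => ∑ i ∈ s, c i * f i x) := by
  classical
  induction s using Finset.induction with
  | empty => simpa using nice_zero
  | @insert j s hj ih =>
    have h1 : Nice (fun x => ∑ i ∈ s, c i * f i x) := ih (fun i hi => hf i (Finset.mem_insert_of_mem hi))
    have h2 : Nice (fun x => c j * f j x) := (hf j (Finset.mem_insert_self _ _)).const_mul _
    have h3 : (fun x => ∑ i ∈ insert j s, c i * f i x)
        = fun x => c j * f j x + ∑ i ∈ s, c i * f i x := by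
      funext x; exact Finset.sum_insert hj
    rw [h3]
    exact h2.add h1


/-- Every `g`-monomial is a binomial combination of the monomials of the continuous part
`g^C = g − g^B` and of the jump part `g^B`:
`g_n(x) = Σ_{k=0}^{n} C(n,k) g_k^C(x) g_{n−k}^B(x)`. -/
theorem stmt12 (g : ℝ → ℝ)
    (hg : Monotone g) (hlc : ∀ x : ℝ, ContinuousWithinAt g (Set.Iio x) x)
    (μ μB μC : MeasureTheory.Measure ℝ)
    (hμ : ∀ a b : ℝ, a ≤ b → μ (Set.Ico a b) = ENNReal.ofReal (g b - g a))
    (hμB : ∀ a b : ℝ, a ≤ b →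
      μB (Set.Ico a b) = ENNReal.ofReal (jumpPart g b - jumpPart g a))
    (hμC : ∀ a b : ℝ, a ≤ b →
      μC (Set.Ico a b) = ENNReal.ofReal ((g b - jumpPart g b) - (g a - jumpPart g a)))
    (x₀ : ℝ) :
    ∀ n : ℕ, ∀ x : ℝ,
      gMon μ x₀ n x = ∑ k ∈ Finset.range (n + 1),
        (n.choose k : ℝ) * gMon μC x₀ k x * gMon μB x₀ (n - k) x := by
  have hfinB : ∀ a b : ℝ, a ≤ b → μB (Set.Ico a b) ≠ ⊤ := fun a b h => by
    rw [hμB a b h]; exact ENNReal.ofReal_ne_top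
  have hfinC : ∀ a b : ℝ, a ≤ b → μC (Set.Ico a b) ≠ ⊤ := fun a b h => by
    rw [hμC a b h]; exact ENNReal.ofReal_ne_top
  have hatomC : ∀ a : ℝ, μC {a} = 0 := muC_atomless hg hμC
  have hsum : μ = μC + μB := mu_eq_add hg hμ hμB hμC
  set F := gMon μC x₀ with hF
  set G := gMon μB x₀ with hG
  intro n
  induction n with
  | zero =>
    intro x
    have h1 : gMon μ x₀ 0 x = 1 := rfl
    have h2 : F 0 x = 1 := rfl
    have h3 : G 0 x = 1 := rfl
    simp [h1, h2, h3]
  | succ n ih =>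
    intro x
    -- the n-th monomial as a sum
    have hP : gMon μ x₀ n = fun y => ∑ k ∈ Finset.range (n+1),
        (n.choose k : ℝ) * (F k y * G (n-k) y) := by
      funext y
      rw [ih y]
      exact Finset.sum_congr rfl (fun k _ => by ring)
    have hNice : ∀ k ∈ Finset.range (n+1), Nice (fun y => F k y * G (n-k) y) :=
      fun k _ => (gMon_nice hfinC x₀ k).mul (gMon_nice hfinB x₀ (n-k))
    -- LHS computation
    have hLHS : gMon μ x₀ (n+1) x
        = ((n:ℝ)+1) * ((∑ k ∈ Finset.range (n+1),
            (n.choose k : ℝ) * ointeg μC (fun t => F k t * G (n-k) t) x₀ x)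
          + ∑ k ∈ Finset.range (n+1),
            (n.choose k : ℝ) * ointeg μB (fun t => F k t * G (n-k) t) x₀ x) := by
      have h0 : gMon μ x₀ (n+1) x = ((n:ℝ)+1) * ointeg μ (gMon μ x₀ n) x₀ x := rfl
      rw [h0, hP, hsum,
        ointeg_add_measure hfinC hfinB
          (nice_sum (Finset.range (n+1)) _ _ hNice) x₀ x,
        ointeg_finset_sum hfinC (Finset.range (n+1)) _ _ hNice x₀ x,
        ointeg_finset_sum hfinB (Finset.range (n+1)) _ _ hNice x₀ x]
    -- key per-term identity
    have key : ∀ k ∈ Finset.range (n+1),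
        (((n+1).choose (k+1) : ℝ)) * (F (k+1) x * G (n-k) x)
          = ((n:ℝ)+1) * (n.choose k : ℝ) * ointeg μC (fun t => F k t * G (n-k) t) x₀ x
            + ((n:ℝ)+1) * (n.choose (k+1) : ℝ) * ointeg μB (fun t => F (k+1) t * G (n-(k+1)) t) x₀ x := by
      intro k hk
      rw [Finset.mem_range] at hk
      have hkn : k ≤ n := Nat.lt_succ_iff.1 hk
      rcases lt_or_eq_of_le hkn with hlt | heq
      · -- k < n
        set m := n - k - 1 with hm
        have hm1 : n - k = m + 1 := by omega
        have hm2 : n - (k+1) = m := by omega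
        have PR := prod_rule (νC := μC) (νB := μB) (x₀ := x₀) hfinC hfinB hatomC k m x
        rw [hm1, hm2]
        have idA : (((n+1).choose (k+1) : ℝ)) * ((k:ℝ)+1) = ((n:ℝ)+1) * (n.choose k : ℝ) := by
          have h2 : ((n+1) * n.choose k : ℕ) = ((n+1).choose (k+1) * (k+1) : ℕ) :=
            Nat.add_one_mul_choose_eq n k
          have h2' : ((n:ℝ)+1) * (n.choose k : ℝ) = ((n+1).choose (k+1) : ℝ) * ((k:ℝ)+1) := by
            exact_mod_cast h2
          linear_combination (-1 : ℝ) * h2'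
        have idB : (((n+1).choose (k+1) : ℝ)) * ((m:ℝ)+1) = ((n:ℝ)+1) * (n.choose (k+1) : ℝ) := by
          have h2 := Nat.choose_mul_succ_eq n (k+1)
          have h4 : n + 1 - (k+1) = m + 1 := by omega
          rw [h4] at h2
          have h2' : (n.choose (k+1) : ℝ) * ((n:ℝ)+1) = ((n+1).choose (k+1) : ℝ) * ((m:ℝ)+1) := by
            exact_mod_cast h2
          linear_combination (-1 : ℝ) * h2'
        rw [← hF, ← hG] at PR
        linear_combination (((n+1).choose (k+1) : ℝ)) * PR
          + (ointeg μC (fun t => F k t * G (m+1) t) x₀ x) * idA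
          + (ointeg μB (fun t => F (k+1) t * G m t) x₀ x) * idB
      · -- k = n
        subst heq
        rw [Nat.sub_self, Nat.choose_self, Nat.choose_succ_self, Nat.choose_self]
        have hG0 : ∀ t : ℝ, G 0 t = 1 := fun t => rfl
        have hF1 : F (k+1) x = ((k:ℝ)+1) * ointeg μC (fun t => F k t * G 0 t) x₀ x := by
          have h1 : F (k+1) x = ((k:ℝ)+1) * ointeg μC (F k) x₀ x := rfl
          rw [h1]
          congr 1
          congr 1
          funext t
          rw [hG0 t, mul_one]
        push_cast
        rw [hG0 x, hF1]
        ring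
    -- now assemble the RHS
    rw [hLHS]
    rw [Finset.sum_range_succ' _ (n+1)]
    -- reduce indices (n+1) - (i+1) = n - i
    have hidx : ∀ i, (n+1) - (i+1) = n - i := fun i => Nat.succ_sub_succ n i
    have hsum1 : ∑ i ∈ Finset.range (n+1),
        (((n+1).choose (i+1) : ℝ)) * F (i+1) x * G ((n+1) - (i+1)) x
        = ∑ i ∈ Finset.range (n+1),
          (((n:ℝ)+1) * (n.choose i : ℝ) * ointeg μC (fun t => F i t * G (n-i) t) x₀ x
            + ((n:ℝ)+1) * (n.choose (i+1) : ℝ) * ointeg μB (fun t => F (i+1) t * G (n-(i+1)) t) x₀ x) := by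
      refine Finset.sum_congr rfl (fun i hi => ?_)
      rw [hidx i, mul_assoc]
      exact key i hi
    rw [hsum1]
    rw [Finset.sum_add_distrib]
    -- second sum reindex
    have hsum2 : ∑ i ∈ Finset.range (n+1),
        ((n:ℝ)+1) * (n.choose (i+1) : ℝ) * ointeg μB (fun t => F (i+1) t * G (n-(i+1)) t) x₀ x
        = ((n:ℝ)+1) * ((∑ j ∈ Finset.range (n+1),
            (n.choose j : ℝ) * ointeg μB (fun t => F j t * G (n-j) t) x₀ x)
          - (n.choose 0 : ℝ) * ointeg μB (fun t => F 0 t * G n t) x₀ x) := by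
      have e1 : ∑ j ∈ Finset.range (n+2), (n.choose j : ℝ) * ointeg μB (fun t => F j t * G (n-j) t) x₀ x
          = (∑ i ∈ Finset.range (n+1), (n.choose (i+1) : ℝ) * ointeg μB (fun t => F (i+1) t * G (n-(i+1)) t) x₀ x)
            + (n.choose 0 : ℝ) * ointeg μB (fun t => F 0 t * G (n-0) t) x₀ x :=
        Finset.sum_range_succ' _ (n+1)
      have e2 : ∑ j ∈ Finset.range (n+2), (n.choose j : ℝ) * ointeg μB (fun t => F j t * G (n-j) t) x₀ x
          = (∑ j ∈ Finset.range (n+1), (n.choose j : ℝ) * ointeg μB (fun t => F j t * G (n-j) t) x₀ x)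
            + (n.choose (n+1) : ℝ) * ointeg μB (fun t => F (n+1) t * G (n-(n+1)) t) x₀ x :=
        Finset.sum_range_succ _ (n+1)
      have hz : (n.choose (n+1) : ℝ) = 0 := by
        rw [Nat.choose_eq_zero_of_lt (Nat.lt_succ_self n)]; norm_num
      rw [hz, zero_mul, add_zero] at e2
      rw [Nat.sub_zero] at e1
      have e3 : ∑ i ∈ Finset.range (n+1), (n.choose (i+1) : ℝ) * ointeg μB (fun t => F (i+1) t * G (n-(i+1)) t) x₀ x
          = (∑ j ∈ Finset.range (n+1), (n.choose j : ℝ) * ointeg μB (fun t => F j t * G (n-j) t) x₀ x)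
            - (n.choose 0 : ℝ) * ointeg μB (fun t => F 0 t * G n t) x₀ x := by
        linarith [e1, e2]
      calc ∑ i ∈ Finset.range (n+1),
          ((n:ℝ)+1) * (n.choose (i+1) : ℝ) * ointeg μB (fun t => F (i+1) t * G (n-(i+1)) t) x₀ x
          = ((n:ℝ)+1) * ∑ i ∈ Finset.range (n+1),
              (n.choose (i+1) : ℝ) * ointeg μB (fun t => F (i+1) t * G (n-(i+1)) t) x₀ x := by
            rw [Finset.mul_sum]
            exact Finset.sum_congr rfl (fun i _ => by ring)
        _ = ((n:ℝ)+1) * ((∑ j ∈ Finset.range (n+1),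
              (n.choose j : ℝ) * ointeg μB (fun t => F j t * G (n-j) t) x₀ x)
            - (n.choose 0 : ℝ) * ointeg μB (fun t => F 0 t * G n t) x₀ x) := by
            rw [e3]
    rw [hsum2]
    have hic : ∑ i ∈ Finset.range (n+1),
        ((n:ℝ)+1) * (n.choose i : ℝ) * ointeg μC (fun t => F i t * G (n-i) t) x₀ x
        = ((n:ℝ)+1) * ∑ i ∈ Finset.range (n+1),
            (n.choose i : ℝ) * ointeg μC (fun t => F i t * G (n-i) t) x₀ x := by
      rw [Finset.mul_sum]
      exact Finset.sum_congr rfl (fun i _ => by ring)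
    have h0 : (((n+1).choose 0 : ℕ) : ℝ) * F 0 x * G (n + 1 - 0) x
        = ((n:ℝ)+1) * ((n.choose 0 : ℝ) * ointeg μB (fun t => F 0 t * G n t) x₀ x) := by
      have hgn : G (n+1) x = ((n:ℝ)+1) * ointeg μB (G n) x₀ x := rfl
      have hfun : (fun t => F 0 t * G n t) = G n := by
        funext t
        show (1:ℝ) * G n t = G n t
        rw [one_mul]
      have hF0 : F 0 x = 1 := rfl
      rw [Nat.sub_zero, hgn, hfun, hF0, Nat.choose_zero_right, Nat.choose_zero_right]
      push_cast
      ring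
    rw [hic, h0]
    ring
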